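/- Fix an integer a ≥ 1. Let m, n ≥ 1 be integers, let P(Y) ∈ R[Y] be m-triangular of degree d and let Q(Y) ∈ R[Y] be n-triangular of degree e. Then P(Y)·Q(Y) is (m+n)-triangular (of degree d+e). -/

import Mathlib

open Polynomial

noncomputable section

/-- The ring `R = ℂ[u₀,…,u_{a−1}][u_a, u_a⁻¹]`: Laurent polynomials in `u_a`
over the polynomial ring `ℂ[u₀,…,u_{a−1}]`. -/
abbrev LaurentRing (a : ℕ) : Type := LaurentPolynomial (MvPolynomial (Fin a) ℂ)

/-- The generators `u_0, …, u_a` of `R`; `u i` for `i < a` is the polynomial variable `u_i`,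
and `u a` is the Laurent variable `u_a`. -/
noncomputable def u (a : ℕ) (i : ℕ) : LaurentRing a :=
  if h : i < a then LaurentPolynomial.C (MvPolynomial.X (⟨i, h⟩ : Fin a))
  else LaurentPolynomial.T 1

/-- `P ∈ R[Y]` is `m`-triangular of degree `d` if `deg P = d ≥ a` and for `d − a ≤ l ≤ d`
one has `p_l = q_l u_a^{m−1} u_{a−d+l} + P_l` with `q_l ∈ ℚ`, `q_l > 0`, and
`P_l ∈ ℂ[u_{a−d+l+1},…,u_a]`; for `l = d` this means `p_d = q_d u_a^m`. -/
def IsTriangular (a m d : ℕ) (P : Polynomial (LaurentRing a)) : Prop :=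
  P.natDegree = d ∧ a ≤ d ∧
  (∃ q : ℚ, 0 < q ∧ P.coeff d = algebraMap ℚ (LaurentRing a) q * (u a a) ^ m) ∧
  (∀ l, d - a ≤ l → l < d →
    ∃ (q : ℚ) (Pl : LaurentRing a), 0 < q ∧
      Pl ∈ Algebra.adjoin ℂ (u a '' {i : ℕ | a - (d - l) + 1 ≤ i ∧ i ≤ a}) ∧
      P.coeff l = algebraMap ℚ (LaurentRing a) q *
        ((u a a) ^ (m - 1) * u a (a - (d - l))) + Pl)

lemma rat_mem (a : ℕ) (S : Subalgebra ℂ (LaurentRing a)) (q : ℚ) :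
    algebraMap ℚ (LaurentRing a) q ∈ S := by
  rw [show (algebraMap ℚ (LaurentRing a)) =
    (algebraMap ℂ (LaurentRing a)).comp (algebraMap ℚ ℂ) from Subsingleton.elim _ _]
  exact S.algebraMap_mem _

lemma rat_ne_zero (a : ℕ) (q : ℚ) (h : q ≠ 0) : algebraMap ℚ (LaurentRing a) q ≠ 0 := by
  simpa using (algebraMap ℚ (LaurentRing a)).injective.ne_iff.mpr h

lemma ua_unit (a : ℕ) : IsUnit (u a a) := by
  simp only [u, dif_neg (lt_irrefl a)]
  exact LaurentPolynomial.isUnit_T 1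

lemma adjoin_mono' (a k k' : ℕ) (hk : k ≤ k') :
    Algebra.adjoin ℂ (u a '' {i : ℕ | a - k + 1 ≤ i ∧ i ≤ a}) ≤
    Algebra.adjoin ℂ (u a '' {i : ℕ | a - k' + 1 ≤ i ∧ i ≤ a}) := by
  apply Algebra.adjoin_mono
  apply Set.image_mono
  rintro i ⟨h1, h2⟩
  exact ⟨by omega, h2⟩

lemma u_mem (a k i : ℕ) (h1 : a - k + 1 ≤ i) (h2 : i ≤ a) :
    u a i ∈ Algebra.adjoin ℂ (u a '' {j : ℕ | a - k + 1 ≤ j ∧ j ≤ a}) :=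
  Algebra.subset_adjoin ⟨i, ⟨h1, h2⟩, rfl⟩

/-- the product of an `m`-triangular polynomial of degree `d`
and an `n`-triangular polynomial of degree `e` is `(m+n)`-triangular (of degree `d+e`). -/
theorem mul_isTriangular (a : ℕ) (ha : 1 ≤ a) (m n : ℕ) (hm : 1 ≤ m) (hn : 1 ≤ n) (d e : ℕ)
    (P Q : Polynomial (LaurentRing a))
    (hP : IsTriangular a m d P) (hQ : IsTriangular a n e Q) :
    IsTriangular a (m + n) (d + e) (P * Q) := by
  obtain ⟨hPd, haP, ⟨qP, hqP, hPlead⟩, hPco⟩ := hP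
  obtain ⟨hQd, haQ, ⟨qQ, hqQ, hQlead⟩, hQco⟩ := hQ
  have hua : u a a ≠ 0 := (ua_unit a).ne_zero
  have hPlc : P.coeff d ≠ 0 := by
    rw [hPlead]
    exact mul_ne_zero (rat_ne_zero a qP hqP.ne') (pow_ne_zero _ hua)
  have hQlc : Q.coeff e ≠ 0 := by
    rw [hQlead]
    exact mul_ne_zero (rat_ne_zero a qQ hqQ.ne') (pow_ne_zero _ hua)
  have hP0 : P ≠ 0 := fun h => hPlc (by simp [h])
  have hQ0 : Q ≠ 0 := fun h => hQlc (by simp [h])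
  have hdeg : (P * Q).natDegree = d + e := by
    rw [Polynomial.natDegree_mul hP0 hQ0, hPd, hQd]
  refine ⟨hdeg, by omega, ⟨qP * qQ, by positivity, ?_⟩, ?_⟩
  · have hc := Polynomial.coeff_mul_degree_add_degree P Q
    rw [hPd, hQd] at hc
    rw [hc, Polynomial.leadingCoeff, Polynomial.leadingCoeff, hPd, hQd, hPlead, hQlead,
      map_mul, pow_add]
    ring
  · intro l hl1 hl2
    set k := d + e - l with hk
    have hk1 : 1 ≤ k := by omega
    have hka : k ≤ a := by omega
    have hkd : k ≤ d := le_trans hka haP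
    have hke : k ≤ e := le_trans hka haQ
    obtain ⟨q1, P1, hq1, hP1mem, hP1⟩ := hPco (d - k) (by omega) (by omega)
    obtain ⟨q2, Q2, hq2, hQ2mem, hQ2⟩ := hQco (e - k) (by omega) (by omega)
    rw [show d - (d - k) = k by omega] at hP1mem hP1
    rw [show e - (e - k) = k by omega] at hQ2mem hQ2
    set A := algebraMap ℚ (LaurentRing a) with hA
    set S := Algebra.adjoin ℂ (u a '' {i : ℕ | a - k + 1 ≤ i ∧ i ≤ a}) with hS
    set T := ((Finset.HasAntidiagonal.antidiagonal l).erase (d, e - k)).erase (d - k, e) with hT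
    have hmem1 : ((d : ℕ), e - k) ∈ Finset.HasAntidiagonal.antidiagonal l := by
      rw [Finset.HasAntidiagonal.mem_antidiagonal]; omega
    have hmem2 : ((d - k : ℕ), e) ∈ (Finset.HasAntidiagonal.antidiagonal l).erase (d, e - k) := by
      rw [Finset.mem_erase, Finset.HasAntidiagonal.mem_antidiagonal]
      refine ⟨?_, by omega⟩
      simp only [ne_eq, Prod.mk.injEq, not_and]
      omega
    have hsum : (P * Q).coeff l = P.coeff d * Q.coeff (e - k) +
        (P.coeff (d - k) * Q.coeff e + ∑ x ∈ T, P.coeff x.1 * Q.coeff x.2) := by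
      rw [Polynomial.coeff_mul, ← Finset.add_sum_erase _ _ hmem1,
        ← Finset.add_sum_erase _ _ hmem2]
    refine ⟨qP * q2 + q1 * qQ,
      A qP * u a a ^ m * Q2 + P1 * (A qQ * u a a ^ n) +
        ∑ x ∈ T, P.coeff x.1 * Q.coeff x.2,
      by positivity, ?_, ?_⟩
    · refine add_mem (add_mem ?_ ?_) ?_
      · exact mul_mem (mul_mem (rat_mem a S qP)
          (pow_mem (u_mem a k a (by omega) le_rfl) m)) hQ2mem
      · exact mul_mem hP1mem (mul_mem (rat_mem a S qQ)
          (pow_mem (u_mem a k a (by omega) le_rfl) n))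
      · refine sum_mem fun x hx => ?_
        have hne2 : x ≠ ((d - k : ℕ), e) := Finset.ne_of_mem_erase hx
        have hx' := Finset.mem_of_mem_erase hx
        have hne1 : x ≠ ((d : ℕ), e - k) := Finset.ne_of_mem_erase hx'
        have hadd : x.1 + x.2 = l := by
          have := Finset.mem_of_mem_erase hx'
          rwa [Finset.HasAntidiagonal.mem_antidiagonal] at this
        rcases lt_or_ge d x.1 with hi | hi
        · rw [Polynomial.coeff_eq_zero_of_natDegree_lt (p := P) (hPd ▸ hi), zero_mul]
          exact zero_mem S
        rcases lt_or_ge e x.2 with hj | hj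
        · rw [Polynomial.coeff_eq_zero_of_natDegree_lt (p := Q) (hQd ▸ hj), mul_zero]
          exact zero_mem S
        have hne1' : ¬(x.1 = d ∧ x.2 = e - k) := by
          intro h; exact hne1 (Prod.ext h.1 h.2)
        have hne2' : ¬(x.1 = d - k ∧ x.2 = e) := by
          intro h; exact hne2 (Prod.ext h.1 h.2)
        have hx1 : d - k < x.1 ∧ x.1 < d := by omega
        have hx2 : e - k < x.2 ∧ x.2 < e := by omega
        obtain ⟨q3, P3, _, hP3mem, hP3⟩ := hPco x.1 (by omega) hx1.2
        obtain ⟨q4, Q4, _, hQ4mem, hQ4⟩ := hQco x.2 (by omega) hx2.2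
        rw [hP3, hQ4]
        refine mul_mem (add_mem ?_ ?_) (add_mem ?_ ?_)
        · exact mul_mem (rat_mem a S q3)
            (mul_mem (pow_mem (u_mem a k a (by omega) le_rfl) (m - 1))
              (u_mem a k (a - (d - x.1)) (by omega) (by omega)))
        · exact adjoin_mono' a (d - x.1) k (by omega) hP3mem
        · exact mul_mem (rat_mem a S q4)
            (mul_mem (pow_mem (u_mem a k a (by omega) le_rfl) (n - 1))
              (u_mem a k (a - (e - x.2)) (by omega) (by omega)))
        · exact adjoin_mono' a (e - x.2) k (by omega) hQ4mem
    · have e1 : u a a ^ m * u a a ^ (n - 1) = u a a ^ (m + n - 1) := by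
        rw [← pow_add]; congr 1; omega
      have e2 : u a a ^ (m - 1) * u a a ^ n = u a a ^ (m + n - 1) := by
        rw [← pow_add]; congr 1; omega
      rw [hsum, hPlead, hQlead, hP1, hQ2, map_add, map_mul, map_mul]
      linear_combination (A qP * A q2 * u a (a - k)) * e1 +
        (A q1 * A qQ * u a (a - k)) * e2
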